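/- Let R and S be commutative Artinian local rings, each injective as a module over itself (i.e., zero-dimensional Gorenstein local rings), and let π : R → S be a surjective ring homomorphism with kernel I. Regard S as an R-module via π. Then S is isomorphic as an R-module to the ideal R[I] := { x ∈ R : I·x = 0 }. In particular, there exists an injective R-module homomorphism S → R. -/

import Mathlib

open IsLocalRing Submodule LinearMap

section Aux

/-- In a local ring with nilpotent maximal ideal, every nonzero element of a module
has a nonzero "socle multiple". -/
lemma aux_socle {T M : Type*} [CommRing T] [IsLocalRing T] [AddCommGroup M] [Module T M]
    (hnil : ∃ n, (maximalIdeal T) ^ n = ⊥) {x : M} (hx : x ≠ 0) :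
    ∃ c : T, c • x ≠ 0 ∧ ∀ a ∈ maximalIdeal T, a • (c • x) = 0 := by
  obtain ⟨n, hn⟩ := hnil
  have hP : ∃ k, ∀ c ∈ (maximalIdeal T) ^ k, c • x = 0 := by
    refine ⟨n, fun c hc => ?_⟩
    rw [hn] at hc
    simp [Ideal.mem_bot.mp hc]
  classical
  set k₀ := Nat.find hP with hk₀
  have hk₀spec := Nat.find_spec hP
  have hk₀pos : k₀ ≠ 0 := by
    intro h
    have := hk₀spec (c := 1) (by rw [← hk₀, h, pow_zero]; simp [Ideal.one_eq_top])
    simp at this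
    exact hx this
  have hmin : ¬ ∀ c ∈ (maximalIdeal T) ^ (k₀ - 1), c • x = 0 :=
    Nat.find_min hP (Nat.sub_lt (Nat.pos_of_ne_zero hk₀pos) one_pos)
  push_neg at hmin
  obtain ⟨c, hc, hcx⟩ := hmin
  refine ⟨c, hcx, fun a ha => ?_⟩
  rw [smul_smul]
  apply hk₀spec
  have : (maximalIdeal T) ^ k₀ = (maximalIdeal T) ^ (k₀ - 1) * maximalIdeal T := by
    have h1 : k₀ - 1 + 1 = k₀ := Nat.sub_add_cancel (Nat.one_le_iff_ne_zero.mpr hk₀pos)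
    conv_lhs => rw [← h1]
    rw [pow_succ]
  rw [this, mul_comm a c]
  exact Ideal.mul_mem_mul hc ha

/-- Linear map from the cyclic submodule generated by `y` sending `r • y` to `r * b`. -/
lemma aux_lift {T M : Type*} [CommRing T] [AddCommGroup M] [Module T M]
    (y : M) (b : T) (h : ∀ r : T, r • y = 0 → r * b = 0) :
    ∃ f : ↥(LinearMap.range (LinearMap.toSpanSingleton T M y)) →ₗ[T] T,
      ∀ (z : ↥(LinearMap.range (LinearMap.toSpanSingleton T M y))) (r : T),
        (z : M) = r • y → f z = r * b := by
  set q := LinearMap.toSpanSingleton T M y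
  set p := LinearMap.toSpanSingleton T T b
  have hker : LinearMap.ker q ≤ LinearMap.ker p := by
    intro r hr
    rw [LinearMap.mem_ker] at hr ⊢
    simpa [p] using h r (by simpa [q] using hr)
  set e := q.quotKerEquivRange
  refine ⟨(Submodule.liftQ (LinearMap.ker q) p hker) ∘ₗ (e.symm : _ →ₗ[T] _), ?_⟩
  rintro z r hz
  have hez : e (Submodule.Quotient.mk r) = z := by
    apply Subtype.ext
    rw [hz]
    rfl
  have : e.symm z = Submodule.Quotient.mk r := by rw [← hez, LinearEquiv.symm_apply_apply]
  simp only [LinearMap.comp_apply, LinearEquiv.coe_coe, this, Submodule.liftQ_apply]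
  simp [p, LinearMap.toSpanSingleton_apply, smul_eq_mul]

end Aux

section DoubleAnn

variable {R : Type*} [CommRing R] [IsArtinianRing R] [IsLocalRing R] [Module.Injective R R]

omit [Module.Injective R R] in
lemma aux_nil : ∃ n, (maximalIdeal R) ^ n = ⊥ := by
  obtain ⟨n, hn⟩ := IsArtinianRing.isNilpotent_jacobson_bot (R := R)
  exact ⟨n, by rwa [IsLocalRing.jacobson_eq_maximalIdeal ⊥ bot_ne_top] at hn⟩

/-- Double annihilator lemma for zero-dimensional Gorenstein local rings. -/
lemma aux_double_ann (J : Ideal R) :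
    (Submodule.annihilator (J : Submodule R R)).annihilator = J := by
  refine le_antisymm ?_ ?_
  swap
  · intro x hx
    rw [Submodule.mem_annihilator]
    intro n hn
    rw [Submodule.mem_annihilator] at hn
    rw [smul_eq_mul, mul_comm, ← smul_eq_mul]
    exact hn x hx
  intro x hx
  by_contra hxJ
  -- work in M := R ⧸ J
  set M := R ⧸ J
  have hxbar : (Ideal.Quotient.mk J x : M) ≠ 0 := by
    simpa [Ideal.Quotient.eq_zero_iff_mem] using hxJ
  -- find a nonzero socle element y of R
  have : Nontrivial R := inferInstance
  obtain ⟨y0, hy0, hy0soc⟩ := aux_socle (aux_nil (R := R)) (x := (1 : R)) one_ne_zero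
  set y := y0 • (1 : R) with hy
  have hyne : y ≠ 0 := hy0
  have hysoc : ∀ a ∈ maximalIdeal R, a * y = 0 := by
    intro a ha; simpa [smul_eq_mul] using hy0soc a ha
  -- the cyclic submodule of M generated by x̄
  set xb : M := Ideal.Quotient.mk J x
  have hlift : ∀ r : R, r • xb = 0 → r * y = 0 := by
    intro r hr
    have hrx : r * x ∈ J := by
      have : (Ideal.Quotient.mk J (r * x) : M) = 0 := by
        rw [← hr]; rfl
      rwa [Ideal.Quotient.eq_zero_iff_mem] at this
    -- r ∈ (J : x) which is proper, hence r ∈ maximalIdeal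
    have hrm : r ∈ maximalIdeal R := by
      by_contra hrm
      have hu : IsUnit r := by
        by_contra hu
        exact hrm ((IsLocalRing.mem_maximalIdeal r).mpr (mem_nonunits_iff.mpr hu))
      obtain ⟨u, rfl⟩ := hu
      have : x ∈ J := by
        have := J.mul_mem_left ((u⁻¹ : Rˣ) : R) hrx
        rwa [← mul_assoc, Units.inv_mul, one_mul] at this
      exact hxJ this
    exact hysoc r hrm
  obtain ⟨f, hf⟩ := aux_lift xb y hlift
  -- extend f along the inclusion of the cyclic submodule into M
  obtain ⟨F, hF⟩ := Module.Injective.out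
    (Submodule.subtype (LinearMap.range (LinearMap.toSpanSingleton R M xb)))
    (Submodule.injective_subtype _) f
  set G := F ∘ₗ (Submodule.mkQ J)
  have hGz : ∀ r : R, G r = r * G 1 := by
    intro r
    have : G r = G (r • 1) := by rw [smul_eq_mul, mul_one]
    rw [this, map_smul, smul_eq_mul]
  have hzann : G 1 ∈ Submodule.annihilator (J : Submodule R R) := by
    rw [Submodule.mem_annihilator]
    intro j hj
    have : G j = 0 := by
      show F (Submodule.mkQ J j) = 0
      have : Submodule.mkQ J j = 0 := by
        rw [Submodule.mkQ_apply]
        exact (Submodule.Quotient.mk_eq_zero J).mpr hj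
      rw [this, map_zero]
    rw [smul_eq_mul, mul_comm, ← hGz j, this]
  have hGx : G x = y := by
    show F (Submodule.mkQ J x) = y
    have hmem : (xb : M) ∈ LinearMap.range (LinearMap.toSpanSingleton R M xb) :=
      ⟨1, by simp⟩
    have := hF ⟨xb, hmem⟩
    rw [Submodule.subtype_apply] at this
    have hfz := hf ⟨xb, hmem⟩ 1 (by simp)
    rw [hfz, one_mul] at this
    exact this
  have : x • (G 1) = 0 := by
    rw [Submodule.mem_annihilator] at hx
    exact hx _ hzann
  rw [smul_eq_mul, ← hGz x, hGx] at this
  exact hyne this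

end DoubleAnn

section Soc

/-- In a zero-dimensional Gorenstein local ring, the socle is simple: any socle element is a
multiple of any nonzero socle element. -/
lemma aux_soc_cyclic {T : Type*} [CommRing T] [IsArtinianRing T] [IsLocalRing T]
    [Module.Injective T T] {a b : T} (ha : a ≠ 0)
    (hasoc : ∀ m ∈ maximalIdeal T, m * a = 0) (hbsoc : ∀ m ∈ maximalIdeal T, m * b = 0) :
    ∃ c : T, b = c * a := by
  have hlift : ∀ r : T, r • a = 0 → r * b = 0 := by
    intro r hr
    rw [smul_eq_mul] at hr
    have hrm : r ∈ maximalIdeal T := by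
      by_contra hrm
      have hu : IsUnit r := by
        by_contra hu
        exact hrm ((IsLocalRing.mem_maximalIdeal r).mpr (mem_nonunits_iff.mpr hu))
      obtain ⟨u, rfl⟩ := hu
      have : a = 0 := by
        have := congrArg (fun t => ((u⁻¹ : Tˣ) : T) * t) hr
        simpa [← mul_assoc] using this
      exact ha this
    exact hbsoc r hrm
  obtain ⟨f, hf⟩ := aux_lift a b hlift
  obtain ⟨F, hF⟩ := Module.Injective.out
    (Submodule.subtype (LinearMap.range (LinearMap.toSpanSingleton T T a)))
    (Submodule.injective_subtype _) f
  have hmem : a ∈ LinearMap.range (LinearMap.toSpanSingleton T T a) := ⟨1, by simp⟩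
  have hFa : F a = b := by
    have := hF ⟨a, hmem⟩
    rw [Submodule.subtype_apply] at this
    rw [this, hf ⟨a, hmem⟩ 1 (by simp), one_mul]
  refine ⟨F 1, ?_⟩
  have : F a = a * F 1 := by
    conv_lhs => rw [show a = a • (1 : T) from by simp, map_smul, smul_eq_mul]
  rw [← hFa, this, mul_comm]

end Soc

/-- Let `R` and `S` be commutative Artinian local rings, each injective as a
module over itself (i.e. zero-dimensional Gorenstein local rings), and let `π : R → S` be a
surjective ring homomorphism with kernel `I`.  Regard `S` as an `R`-module via `π`.  Then `S` is
isomorphic as an `R`-module to the ideal `R[I] = { x ∈ R : I • x = 0 }`; in particular there is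
an injective `R`-module homomorphism `S → R`. -/
theorem stark_systems_stmt7 (R S : Type*) [CommRing R] [IsArtinianRing R] [IsLocalRing R]
    [Module.Injective R R] [CommRing S] [IsArtinianRing S] [IsLocalRing S]
    [Module.Injective S S] (π : R →+* S) (hπ : Function.Surjective π) :
    letI : Module R S := Module.compHom S π
    Nonempty (S ≃ₗ[R] Submodule.torsionBySet R R (RingHom.ker π : Set R)) ∧
      ∃ ι : S →ₗ[R] R, Function.Injective ι := by
  letI : Module R S := Module.compHom S π
  have hsmul : ∀ (r : R) (s : S), r • s = π r * s := fun _ _ => rfl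
  set I : Ideal R := RingHom.ker π with hI
  -- basic facts about the kernel and maximal ideals
  have hIne : I ≠ ⊤ := by
    intro h
    have : (1 : R) ∈ I := h ▸ Submodule.mem_top
    rw [RingHom.mem_ker, map_one] at this
    exact one_ne_zero this
  have hIm : I ≤ maximalIdeal R := IsLocalRing.le_maximalIdeal hIne
  have hπm : ∀ r ∈ maximalIdeal R, π r ∈ maximalIdeal S := by
    intro r hr
    by_contra h
    have hu : IsUnit (π r) := by
      by_contra hu
      exact h ((IsLocalRing.mem_maximalIdeal _).mpr (mem_nonunits_iff.mpr hu))
    obtain ⟨t, ht⟩ := hu.exists_right_inv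
    obtain ⟨t', rfl⟩ := hπ t
    have : r * t' - 1 ∈ I := by
      rw [RingHom.mem_ker, map_sub, map_mul, map_one, ht, sub_self]
    have h1 : (1 : R) ∈ maximalIdeal R := by
      have := sub_mem ((maximalIdeal R).mul_mem_right t' hr) (hIm this)
      simpa using this
    exact (IsLocalRing.maximalIdeal.isMaximal R).ne_top (Ideal.eq_top_of_isUnit_mem _ h1 isUnit_one)
  have hmS : ∀ a ∈ maximalIdeal S, ∃ r ∈ maximalIdeal R, π r = a := by
    intro a ha
    obtain ⟨r, rfl⟩ := hπ a
    refine ⟨r, ?_, rfl⟩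
    by_contra hr
    have hu : IsUnit r := by
      by_contra hu
      exact hr ((IsLocalRing.mem_maximalIdeal _).mpr (mem_nonunits_iff.mpr hu))
    exact ((IsLocalRing.mem_maximalIdeal _).mp ha) (hu.map π)
  have hmksmul : ∀ (r t : R), r • (Ideal.Quotient.mk I t : R ⧸ I) = Ideal.Quotient.mk I (r * t) :=
    fun r t => rfl
  -- the linear equivalence between R ⧸ I and S
  set E := RingHom.quotientKerEquivOfSurjective hπ with hE
  have hEmk : ∀ r : R, E (Ideal.Quotient.mk I r) = π r := fun r => rfl
  let EL : (R ⧸ I) ≃ₗ[R] S :=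
    { E with
      map_smul' := by
        intro r z
        obtain ⟨t, rfl⟩ := Ideal.Quotient.mk_surjective z
        show E (r • Ideal.Quotient.mk I t) = r • E (Ideal.Quotient.mk I t)
        rw [hmksmul, hEmk, hEmk, map_mul, hsmul] }
  have hELmk : ∀ r : R, EL (Ideal.Quotient.mk I r) = π r := hEmk
  -- socle elements
  obtain ⟨cS, hcS, hcSsoc⟩ := aux_socle (aux_nil (R := S)) (x := (1 : S)) one_ne_zero
  set y' : S := cS • (1 : S) with hy'
  have hy'soc : ∀ a ∈ maximalIdeal S, a * y' = 0 := by
    intro a ha; simpa [smul_eq_mul] using hcSsoc a ha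
  obtain ⟨cR, hcR, hcRsoc⟩ := aux_socle (aux_nil (R := R)) (x := (1 : R)) one_ne_zero
  set x₀ : R := cR • (1 : R) with hx₀
  have hx₀soc : ∀ a ∈ maximalIdeal R, a * x₀ = 0 := by
    intro a ha; simpa [smul_eq_mul] using hcRsoc a ha
  have hx₀ne : x₀ ≠ 0 := hcR
  set yb : R ⧸ I := EL.symm y' with hyb
  have hybne : yb ≠ 0 := by
    intro h
    apply hcS
    have := congrArg EL h
    rw [hyb, LinearEquiv.apply_symm_apply, map_zero] at this
    exact this
  have hybsoc : ∀ r ∈ maximalIdeal R, r • yb = 0 := by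
    intro r hr
    rw [hyb, ← map_smul]
    have : r • y' = 0 := by rw [hsmul]; exact hy'soc _ (hπm r hr)
    rw [this, map_zero]
  -- build the injection F : R ⧸ I →ₗ[R] R
  have hlift : ∀ r : R, r • yb = 0 → r * x₀ = 0 := by
    intro r hr
    have hrm : r ∈ maximalIdeal R := by
      by_contra hrm
      have hu : IsUnit r := by
        by_contra hu
        exact hrm ((IsLocalRing.mem_maximalIdeal r).mpr (mem_nonunits_iff.mpr hu))
      obtain ⟨u, rfl⟩ := hu
      apply hybne
      have := congrArg (fun z => ((u⁻¹ : Rˣ) : R) • z) hr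
      simpa [smul_smul] using this
    exact hx₀soc r hrm
  obtain ⟨f, hf⟩ := aux_lift yb x₀ hlift
  obtain ⟨F, hF⟩ := Module.Injective.out
    (Submodule.subtype (LinearMap.range (LinearMap.toSpanSingleton R (R ⧸ I) yb)))
    (Submodule.injective_subtype _) f
  have hFyb : F yb = x₀ := by
    have hmem : yb ∈ LinearMap.range (LinearMap.toSpanSingleton R (R ⧸ I) yb) := ⟨1, by simp⟩
    have := hF ⟨yb, hmem⟩
    rw [Submodule.subtype_apply] at this
    rw [this, hf ⟨yb, hmem⟩ 1 (by simp), one_mul]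
  -- F is injective
  have hFinj : Function.Injective F := by
    rw [← LinearMap.ker_eq_bot, Submodule.eq_bot_iff]
    intro z hz
    rw [LinearMap.mem_ker] at hz
    by_contra hzne
    obtain ⟨c, hcz, hczsoc⟩ := aux_socle (aux_nil (R := R)) hzne
    set w := c • z with hw
    have hFw : F w = 0 := by rw [hw, map_smul, hz, smul_zero]
    set w' : S := EL w with hw'
    have hw'ne : w' ≠ 0 := fun h => hcz (by
      have := congrArg EL.symm h
      rwa [hw', LinearEquiv.symm_apply_apply, map_zero] at this)
    have hw'soc : ∀ a ∈ maximalIdeal S, a * w' = 0 := by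
      intro a ha
      obtain ⟨r, hr, rfl⟩ := hmS a ha
      rw [← hsmul, hw', ← map_smul, hczsoc r hr, map_zero]
    obtain ⟨c', hc'⟩ := aux_soc_cyclic hcS (fun m hm => hy'soc m hm) hw'soc
    obtain ⟨r', rfl⟩ := hπ c'
    have hwr : w = r' • yb := by
      have : w' = r' • y' := by rw [hsmul]; exact hc'
      rw [← LinearEquiv.symm_apply_apply EL w, ← hw', this, map_smul, ← hyb]
    have hwne : w ≠ 0 := hcz
    have hr'm : r' ∉ maximalIdeal R := fun hr' => hwne (by rw [hwr, hybsoc r' hr'])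
    have hu : IsUnit r' := by
      by_contra hu
      exact hr'm ((IsLocalRing.mem_maximalIdeal r').mpr (mem_nonunits_iff.mpr hu))
    have hFwx : F w = r' • x₀ := by rw [hwr, map_smul, hFyb]
    obtain ⟨u, rfl⟩ := hu
    apply hx₀ne
    have h0 : ((u : R)) • x₀ = 0 := by rw [← hFwx, hFw]
    have := congrArg (fun t => ((u⁻¹ : Rˣ) : R) • t) h0
    simpa [smul_smul] using this
  -- identify the range of F with the torsion submodule
  have hann : Submodule.annihilator (LinearMap.range F) = I := by
    apply le_antisymm
    · intro r hr
      rw [Submodule.mem_annihilator] at hr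
      have h1 : r • F (Ideal.Quotient.mk I 1) = 0 := hr _ ⟨_, rfl⟩
      rw [← map_smul] at h1
      have h2 : r • (Ideal.Quotient.mk I 1 : R ⧸ I) = 0 := by
        apply hFinj
        rw [h1, map_zero]
      have : (Ideal.Quotient.mk I r : R ⧸ I) = 0 := by
        rw [← mul_one r, ← hmksmul, h2]
      rwa [Ideal.Quotient.eq_zero_iff_mem] at this
    · intro r hr
      rw [Submodule.mem_annihilator]
      rintro n ⟨z, rfl⟩
      rw [← map_smul]
      obtain ⟨t, rfl⟩ := Ideal.Quotient.mk_surjective z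
      have : r • (Ideal.Quotient.mk I t : R ⧸ I) = 0 := by
        rw [hmksmul, Ideal.Quotient.eq_zero_iff_mem]
        exact I.mul_mem_right t hr
      rw [this, map_zero]
  have htors : (Submodule.annihilator (I : Submodule R R)) =
      Submodule.torsionBySet R R (I : Set R) := by
    ext x
    rw [Submodule.mem_annihilator, Submodule.mem_torsionBySet_iff]
    constructor
    · rintro h ⟨a, ha⟩
      rw [smul_eq_mul, mul_comm, ← smul_eq_mul]
      exact h a ha
    · intro h n hn
      have := h ⟨n, hn⟩
      rw [smul_eq_mul] at this
      rw [smul_eq_mul, mul_comm]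
      exact this
  have hrange : LinearMap.range F = Submodule.torsionBySet R R (I : Set R) := by
    have h := aux_double_ann (LinearMap.range F)
    rw [hann, htors] at h
    exact h.symm
  -- assemble
  constructor
  · exact ⟨EL.symm.trans ((LinearEquiv.ofInjective F hFinj).trans
      (LinearEquiv.ofEq _ _ hrange))⟩
  · refine ⟨F ∘ₗ (EL.symm : S →ₗ[R] R ⧸ I), ?_⟩
    have : Function.Injective (EL.symm : S →ₗ[R] R ⧸ I) := EL.symm.injective
    exact hFinj.comp this
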